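/- arXiv:0902.3842 — 4 statements merged into one kernel-verified Lean document; each statement's English description precedes it below -/
import Mathlib

section
/- Let U, V ⊆ ℂ be domains, K ⊆ U compact, and φ : U → V an injective holomorphic map. For ξ ∈ K and r > 0 small, let E(ξ,r) = φ(D(ξ,r)) and ρ(r) = |φ'(ξ)| r. Then the Lebesgue measure of the symmetric difference E(ξ,r) Δ D(φ(ξ), ρ(r)) is O(r³) as r → 0, uniformly in ξ ∈ K; i.e., there exist constants C, r₀ > 0 such that |E(ξ,r) Δ D(φ(ξ),ρ(r))| ≤ C r³ for all ξ ∈ K and 0 < r ≤ r₀. -/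
open MeasureTheory

set_option maxHeartbeats 2000000 in
theorem conformal_image_symmDiff_disk_cubic
    (U V : Set ℂ) (hU : IsOpen U) (hV : IsOpen V)
    (K : Set ℂ) (hK : IsCompact K) (hKU : K ⊆ U)
    (φ : ℂ → ℂ) (hφ : DifferentiableOn ℂ φ U) (hinj : Set.InjOn φ U)
    (hmap : Set.MapsTo φ U V) :
    ∃ C > 0, ∃ r₀ > 0, ∀ ξ ∈ K, ∀ r : ℝ, 0 < r → r ≤ r₀ →
      volume (symmDiff (φ '' Metric.ball ξ r)
          (Metric.ball (φ ξ) (‖deriv φ ξ‖ * r)))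
        ≤ ENNReal.ofReal (C * r ^ 3) := by
  classical
  have hA : AnalyticOnNhd ℂ φ U := hφ.analyticOnNhd hU
  have hA' : AnalyticOnNhd ℂ (deriv φ) U := hA.deriv
  have hA'' : AnalyticOnNhd ℂ (deriv (deriv φ)) U := hA'.deriv
  obtain ⟨r₀, hr₀, hT⟩ := hK.exists_cthickening_subset_open hU hKU
  set T : Set ℂ := Metric.cthickening r₀ K with hTdef
  have hTc : IsCompact T := hK.cthickening
  -- bound on |φ'| on K
  obtain ⟨M₁, hM₁⟩ := hK.exists_bound_of_continuousOn (hA'.continuousOn.mono hKU)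
  set M : ℝ := max M₁ 0 with hMdef
  have hM0 : 0 ≤ M := le_max_right _ _
  have hM : ∀ ξ ∈ K, ‖deriv φ ξ‖ ≤ M := fun ξ hξ => (hM₁ ξ hξ).trans (le_max_left _ _)
  -- bound on |φ''| on T
  obtain ⟨M₂, hM₂⟩ := hTc.exists_bound_of_continuousOn (hA''.continuousOn.mono hT)
  set b : ℝ := max M₂ 0 + 1 with hbdef
  have hb0 : 0 < b := by positivity
  have hb : ∀ z ∈ T, ‖deriv (deriv φ) z‖ ≤ b := fun z hz =>
    (hM₂ z hz).trans (by simp [hbdef]; linarith [le_max_left M₂ (0:ℝ)])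
  -- inclusion of closed balls into U
  have hcb : ∀ ξ ∈ K, ∀ r : ℝ, r ≤ r₀ → Metric.closedBall ξ r ⊆ T := by
    intro ξ hξ r hr
    exact (Metric.closedBall_subset_closedBall hr).trans
      (Metric.closedBall_subset_cthickening hξ r₀)
  -- Taylor estimate
  have key : ∀ ξ ∈ K, ∀ r : ℝ, 0 < r → r ≤ r₀ → ∀ z ∈ Metric.closedBall ξ r,
      ‖φ z - φ ξ - deriv φ ξ * (z - ξ)‖ ≤ b * r ^ 2 := by
    intro ξ hξ r hr hrr₀ z hz
    have hsub : Metric.closedBall ξ r ⊆ T := hcb ξ hξ r hrr₀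
    have hsubU : Metric.closedBall ξ r ⊆ U := hsub.trans hT
    -- φ' is (b)-Lipschitz on the ball
    have step1 : ∀ z ∈ Metric.closedBall ξ r, ‖deriv φ z - deriv φ ξ‖ ≤ b * r := by
      intro z hz
      have := (convex_closedBall ξ r).norm_image_sub_le_of_norm_deriv_le
        (f := deriv φ) (C := b)
        (fun x hx => (hA' x (hsubU hx)).differentiableAt)
        (fun x hx => hb x (hsub hx)) (Metric.mem_closedBall_self hr.le) hz
      have hzd : ‖z - ξ‖ ≤ r := by
        rw [← dist_eq_norm]; exact Metric.mem_closedBall.mp hz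
      calc ‖deriv φ z - deriv φ ξ‖ ≤ b * ‖z - ξ‖ := this
        _ ≤ b * r := by nlinarith
    have step2 := (convex_closedBall ξ r).norm_image_sub_le_of_norm_hasDerivWithin_le
      (f := fun w => φ w - deriv φ ξ * w) (f' := fun w => deriv φ w - deriv φ ξ)
      (C := b * r)
      (fun x hx => (((hA x (hsubU hx)).differentiableAt.hasDerivAt).sub
        (by simpa using (hasDerivAt_id x).const_mul (deriv φ ξ))).hasDerivWithinAt)
      step1 (Metric.mem_closedBall_self hr.le) hz
    have hzd : ‖z - ξ‖ ≤ r := by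
      rw [← dist_eq_norm]; exact Metric.mem_closedBall.mp hz
    have heq : φ z - φ ξ - deriv φ ξ * (z - ξ)
        = (φ z - deriv φ ξ * z) - (φ ξ - deriv φ ξ * ξ) := by ring
    rw [heq]
    calc ‖(φ z - deriv φ ξ * z) - (φ ξ - deriv φ ξ * ξ)‖ ≤ b * r * ‖z - ξ‖ := step2
      _ ≤ b * r * r := mul_le_mul_of_nonneg_left hzd (by positivity)
      _ = b * r ^ 2 := by ring
  -- The constant
  refine ⟨4 * Real.pi * b * (M + b * r₀), by positivity, r₀, hr₀, ?_⟩
  intro ξ hξ r hr hrr₀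
  set C : ℝ := 4 * Real.pi * b * (M + b * r₀) with hCdef
  set c : ℂ := deriv φ ξ with hcdef
  set ρ : ℝ := ‖c‖ * r with hρdef
  have hρnorm : ρ = ‖c‖ * r := rfl
  have hρ0 : 0 ≤ ρ := by positivity
  have hρM : ρ ≤ M * r := by
    have := hM ξ hξ
    rw [hρnorm]; nlinarith
  set E : Set ℂ := φ '' Metric.ball ξ r with hEdef
  have hballU : Metric.ball ξ r ⊆ U :=
    (Metric.ball_subset_closedBall).trans ((hcb ξ hξ r hrr₀).trans hT)
  have hcbU : Metric.closedBall ξ r ⊆ U := (hcb ξ hξ r hrr₀).trans hT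
  -- E is open
  have hEopen : IsOpen E := by
    have hAball : AnalyticOnNhd ℂ φ (Metric.ball ξ r) := fun z hz => hA z (hballU hz)
    rcases hAball.is_constant_or_isOpen (convex_ball ξ r).isPreconnected with h | h
    · exfalso
      obtain ⟨w, hw⟩ := h
      have h1 : ξ ∈ Metric.ball ξ r := Metric.mem_ball_self hr
      have h2 : ξ + (r / 2 : ℝ) ∈ Metric.ball ξ r := by
        rw [Metric.mem_ball, dist_eq_norm]
        simp only [add_sub_cancel_left]
        rw [Complex.norm_real]
        rw [Real.norm_eq_abs, abs_of_pos (by linarith)]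
        linarith
      have : ξ = ξ + (r / 2 : ℝ) := by
        apply hinj (hballU h1) (hballU h2)
        rw [hw ξ h1, hw _ h2]
      have h0 : ((r / 2 : ℝ) : ℂ) = 0 := left_eq_add.mp this
      rw [Complex.ofReal_eq_zero] at h0
      linarith
    · exact h _ le_rfl Metric.isOpen_ball
  -- Outer inclusion
  have houter : E ⊆ Metric.closedBall (φ ξ) (ρ + b * r ^ 2) := by
    rintro _ ⟨z, hz, rfl⟩
    have hk := key ξ hξ r hr hrr₀ z (Metric.ball_subset_closedBall hz)
    have hzd : ‖z - ξ‖ ≤ r := by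
      rw [← dist_eq_norm]; exact (Metric.mem_ball.mp hz).le
    rw [Metric.mem_closedBall, Complex.dist_eq]
    have h1 : ‖φ z - φ ξ‖ ≤ ‖c * (z - ξ)‖ + b * r ^ 2 := by
      calc ‖φ z - φ ξ‖ = ‖(φ z - φ ξ - c * (z - ξ)) + c * (z - ξ)‖ := by ring_nf
        _ ≤ ‖φ z - φ ξ - c * (z - ξ)‖ + ‖c * (z - ξ)‖ := norm_add_le _ _
        _ ≤ b * r ^ 2 + ‖c * (z - ξ)‖ := by linarith [hk]
        _ = ‖c * (z - ξ)‖ + b * r ^ 2 := by ring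
    have h2 : ‖c * (z - ξ)‖ ≤ ρ := by
      rw [norm_mul, hρnorm]
      have : (0:ℝ) ≤ ‖c‖ := norm_nonneg _
      nlinarith
    calc ‖φ z - φ ξ‖ = ‖φ z - φ ξ‖ := rfl
      _ ≤ ρ + b * r ^ 2 := by linarith
  -- Sphere lower bound
  have hsphere : ∀ w ∈ Metric.sphere ξ r, ρ - b * r ^ 2 ≤ ‖φ w - φ ξ‖ := by
    intro w hw
    have hwcb : w ∈ Metric.closedBall ξ r := Metric.sphere_subset_closedBall hw
    have hk := key ξ hξ r hr hrr₀ w hwcb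
    have hwd : ‖w - ξ‖ = r := by
      rw [← dist_eq_norm]; exact Metric.mem_sphere.mp hw
    have h2 : ‖c * (w - ξ)‖ = ρ := by rw [norm_mul, hwd, hρnorm]
    calc ρ - b * r ^ 2 = ‖c * (w - ξ)‖ - b * r ^ 2 := by rw [h2]
      _ ≤ ‖c * (w - ξ)‖ - ‖φ w - φ ξ - c * (w - ξ)‖ := by linarith [hk]
      _ ≤ ‖φ w - φ ξ‖ := by
          have := norm_sub_norm_le (c * (w - ξ)) (c * (w - ξ) - (φ w - φ ξ))
          simp only [sub_sub_cancel] at this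
          have heq : ‖c * (w - ξ) - (φ w - φ ξ)‖ = ‖φ w - φ ξ - c * (w - ξ)‖ :=
            norm_sub_rev _ _
          linarith
  -- Inner inclusion
  have hinner : Metric.ball (φ ξ) (ρ - b * r ^ 2) ⊆ E := by
    rcases le_or_gt (ρ - b * r ^ 2) 0 with hs | hs
    · rw [Metric.ball_eq_empty.mpr hs]; exact Set.empty_subset _
    · -- frontier E ⊆ φ '' sphere
      have hclE : closure E ⊆ φ '' Metric.closedBall ξ r := by
        apply closure_minimal
        · exact Set.image_mono Metric.ball_subset_closedBall
        · exact ((isCompact_closedBall ξ r).image_of_continuousOn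
            (hφ.continuousOn.mono hcbU)).isClosed
      have hfr : frontier E ⊆ φ '' Metric.sphere ξ r := by
        intro x hx
        rw [hEopen.frontier_eq] at hx
        obtain ⟨hx1, hx2⟩ := hx
        obtain ⟨w, hw, rfl⟩ := hclE hx1
        refine ⟨w, ?_, rfl⟩
        rcases lt_or_eq_of_le (Metric.mem_closedBall.mp hw) with h | h
        · exact absurd ⟨w, Metric.mem_ball.mpr h, rfl⟩ hx2
        · exact Metric.mem_sphere.mpr h
      -- the small ball avoids the frontier
      have hdisj : ∀ x ∈ Metric.ball (φ ξ) (ρ - b * r ^ 2), x ∉ frontier E := by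
        intro x hx hfrx
        obtain ⟨w, hw, rfl⟩ := hfr hfrx
        have h1 := hsphere w hw
        have h2 : ‖φ w - φ ξ‖ < ρ - b * r ^ 2 := by
          rw [← dist_eq_norm]; exact Metric.mem_ball.mp hx
        linarith
      have hsub : Metric.ball (φ ξ) (ρ - b * r ^ 2) ⊆ E ∪ (closure E)ᶜ := by
        intro x hx
        by_cases hxE : x ∈ E
        · exact Or.inl hxE
        · refine Or.inr fun hxcl => hdisj x hx ?_
          rw [hEopen.frontier_eq]
          exact ⟨hxcl, hxE⟩
      have hne : (Metric.ball (φ ξ) (ρ - b * r ^ 2) ∩ E).Nonempty := by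
        refine ⟨φ ξ, Metric.mem_ball_self hs, ⟨ξ, Metric.mem_ball_self hr, rfl⟩⟩
      exact (convex_ball _ _).isPreconnected.subset_left_of_subset_union
        hEopen (isClosed_closure.isOpen_compl)
        (disjoint_compl_right.mono_left subset_closure) hsub hne
  -- symmDiff inclusion into annulus
  have hannulus : symmDiff E (Metric.ball (φ ξ) ρ)
      ⊆ Metric.closedBall (φ ξ) (ρ + b * r ^ 2) \ Metric.ball (φ ξ) (ρ - b * r ^ 2) := by
    intro x hx
    rw [Set.mem_symmDiff] at hx
    rcases hx with ⟨hxE, hxD⟩ | ⟨hxD, hxE⟩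
    · refine ⟨houter hxE, fun hxs => hxD ?_⟩
      exact Metric.ball_subset_ball (by nlinarith) hxs
    · refine ⟨Metric.ball_subset_closedBall.trans
        (Metric.closedBall_subset_closedBall (by nlinarith)) hxD, fun hxs => hxE (hinner hxs)⟩
  -- measure computation
  calc volume (symmDiff E (Metric.ball (φ ξ) ρ))
      ≤ volume (Metric.closedBall (φ ξ) (ρ + b * r ^ 2)
          \ Metric.ball (φ ξ) (ρ - b * r ^ 2)) := measure_mono hannulus
    _ ≤ ENNReal.ofReal (C * r ^ 3) := by
        rw [measure_diff
          (Metric.ball_subset_closedBall.trans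
            (Metric.closedBall_subset_closedBall (by nlinarith)))
          measurableSet_ball.nullMeasurableSet measure_ball_lt_top.ne]
        rw [Complex.volume_closedBall, Complex.volume_ball]
        rw [tsub_le_iff_right]
        set s : ℝ := ρ - b * r ^ 2 with hsdef
        set t : ℝ := ρ + b * r ^ 2 with htdef
        have ht0 : 0 ≤ t := by nlinarith
        have hsmax : ENNReal.ofReal s = ENNReal.ofReal (max s 0) := by
          rcases le_or_gt s 0 with h | h
          · rw [ENNReal.ofReal_eq_zero.mpr h, max_eq_right h]; simp
          · rw [max_eq_left h.le]
        have hπ : (NNReal.pi : ENNReal) = ENNReal.ofReal Real.pi := by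
          rw [← NNReal.coe_real_pi]; exact (ENNReal.ofReal_coe_nnreal).symm
        have hC0 : (0:ℝ) < C := by rw [hCdef]; positivity
        rw [hsmax, hπ, ← ENNReal.ofReal_pow ht0, ← ENNReal.ofReal_pow (le_max_right s 0),
          ← ENNReal.ofReal_mul (by positivity), ← ENNReal.ofReal_mul (by positivity),
          ← ENNReal.ofReal_add (mul_pos hC0 (pow_pos hr 3)).le
            (mul_nonneg (sq_nonneg _) Real.pi_pos.le)]
        apply ENNReal.ofReal_le_ofReal
        -- the real inequality
        have hπ0 : (0:ℝ) < Real.pi := Real.pi_pos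
        rcases le_or_gt (b * r ^ 2) ρ with h | h
        · have hs0 : (0:ℝ) ≤ s := by rw [hsdef]; linarith
          rw [max_eq_left hs0]
          have e1 : t ^ 2 = s ^ 2 + 4 * ρ * (b * r ^ 2) := by
            rw [htdef, hsdef]; ring
          have e2 : 4 * ρ * (b * r ^ 2) ≤ 4 * (M * r) * (b * r ^ 2) := by
            have h1 : (0:ℝ) ≤ 4 * (b * r ^ 2) := by positivity
            nlinarith
          have e4 : 4 * ρ * (b * r ^ 2) * Real.pi ≤ 4 * (M * r) * (b * r ^ 2) * Real.pi :=
            mul_le_mul_of_nonneg_right e2 hπ0.le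
          have e6 : t ^ 2 * Real.pi = s ^ 2 * Real.pi + 4 * ρ * (b * r ^ 2) * Real.pi := by
            rw [e1]; ring
          have e7 : 4 * (M * r) * (b * r ^ 2) * Real.pi ≤ C * r ^ 3 := by
            rw [hCdef]
            have : 4 * (M * r) * (b * r ^ 2) * Real.pi = 4 * Real.pi * b * M * r ^ 3 := by ring
            rw [this]
            have h5 : (0:ℝ) ≤ 4 * Real.pi * b * (b * r₀) * r ^ 3 := by positivity
            nlinarith
          linarith
        · have hs0 : s ≤ 0 := by rw [hsdef]; linarith
          rw [max_eq_right hs0]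
          have ht2 : t ≤ 2 * (b * r ^ 2) := by rw [htdef]; linarith
          have e1 : t ^ 2 ≤ (2 * (b * r ^ 2)) ^ 2 := pow_le_pow_left₀ ht0 ht2 2
          have e3 : (2 * (b * r ^ 2)) ^ 2 ≤ 4 * b ^ 2 * r₀ * r ^ 3 := by
            have h1 : (0:ℝ) ≤ 4 * b ^ 2 * r ^ 3 := by positivity
            nlinarith
          have e4 : t ^ 2 * Real.pi ≤ 4 * b ^ 2 * r₀ * r ^ 3 * Real.pi :=
            mul_le_mul_of_nonneg_right (e1.trans e3) hπ0.le
          have e5 : 4 * b ^ 2 * r₀ * r ^ 3 * Real.pi ≤ C * r ^ 3 := by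
            rw [hCdef]
            have h6 : (0:ℝ) ≤ 4 * Real.pi * b * M * r ^ 3 := by positivity
            nlinarith
          linarith
end

section
/- Let U, V ⊆ ℂ be domains, K ⊆ U compact with D(ξ,r₀) ⊆ U for all ξ ∈ K, and φ : U → V conformal. Then there exist constants C, r₁ > 0 such that for all ξ ∈ K and 0 < r ≤ r₁: D(φ(ξ), |φ'(ξ)|r − Cr²) ⊆ φ(D(ξ,r)) ⊆ D(φ(ξ), |φ'(ξ)|r + Cr²). -/
/-- The operator norm of a continuous linear map `ℂ →L[ℂ] ℂ` equals `‖f 1‖`. -/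
lemma clm_norm_eq_norm_apply_one (f : ℂ →L[ℂ] ℂ) : ‖f‖ = ‖f 1‖ := by
  apply le_antisymm
  · apply ContinuousLinearMap.opNorm_le_bound _ (norm_nonneg _)
    intro x
    have : f x = x * f 1 := by
      have : f x = f (x • (1 : ℂ)) := by simp
      rw [this, f.map_smul]; simp [smul_eq_mul]
    rw [this, norm_mul, mul_comm]
  · simpa using f.le_opNorm 1

theorem conformal_image_disk_sandwich
    (U V : Set ℂ) (hU : IsOpen U) (hV : IsOpen V)
    (K : Set ℂ) (hK : IsCompact K) (hKU : K ⊆ U)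
    (r₀ : ℝ) (hr₀ : 0 < r₀) (hball : ∀ ξ ∈ K, Metric.ball ξ r₀ ⊆ U)
    (φ : ℂ → ℂ) (hφ : DifferentiableOn ℂ φ U) (hinj : Set.InjOn φ U)
    (hmap : Set.MapsTo φ U V) :
    ∃ C > 0, ∃ r₁ > 0, ∀ ξ ∈ K, ∀ r : ℝ, 0 < r → r ≤ r₁ →
      Metric.ball (φ ξ) (‖deriv φ ξ‖ * r - C * r ^ 2) ⊆ φ '' Metric.ball ξ r ∧
      φ '' Metric.ball ξ r ⊆ Metric.ball (φ ξ) (‖deriv φ ξ‖ * r + C * r ^ 2) := by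
  classical
  -- the compact thickening of K inside U
  set T : Set ℂ := Metric.cthickening (r₀ / 2) K with hT
  have hTc : IsCompact T := hK.cthickening
  have hTU : T ⊆ U := by
    have h1 : T ⊆ Metric.thickening r₀ K :=
      Metric.cthickening_subset_thickening' hr₀ (by linarith) K
    refine h1.trans ?_
    intro x hx
    rcases Metric.mem_thickening_iff.1 hx with ⟨z, hzK, hdz⟩
    exact hball z hzK (Metric.mem_ball.2 hdz)
  -- analyticity and second derivative bound
  have hφa : AnalyticOnNhd ℂ φ U := hφ.analyticOnNhd hU
  have hφ' : AnalyticOnNhd ℂ (deriv φ) U := hφa.deriv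
  have hφ'' : AnalyticOnNhd ℂ (deriv (deriv φ)) U := hφ'.deriv
  obtain ⟨M, hM⟩ := hTc.exists_bound_of_continuousOn (hφ''.continuousOn.mono hTU)
  set M₀ : ℝ := max M 0 with hM₀
  have hM₀0 : 0 ≤ M₀ := le_max_right _ _
  have hMbound : ∀ z ∈ T, ‖deriv (deriv φ) z‖ ≤ M₀ := fun z hz =>
    (hM z hz).trans (le_max_left _ _)
  refine ⟨M₀ + 1, by linarith, r₀ / 2, by linarith, ?_⟩
  intro ξ hξ r hr hrr₁
  set a : ℂ := deriv φ ξ with ha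
  have hξU : ξ ∈ U := hKU hξ
  -- closedBall ξ r is inside T and U
  have hcbT : Metric.closedBall ξ r ⊆ T := fun z hz =>
    Metric.mem_cthickening_of_dist_le z ξ _ _ hξ
      (le_trans (Metric.mem_closedBall.1 hz) hrr₁)
  have hcbU : Metric.closedBall ξ r ⊆ U := fun z hz => by
    refine hball ξ hξ (Metric.mem_ball.2 ?_)
    exact lt_of_le_of_lt (Metric.mem_closedBall.1 hz) (by linarith)
  have hξcb : ξ ∈ Metric.closedBall ξ r := Metric.mem_closedBall_self hr.le
  -- Lipschitz bound for deriv φ on the closed ball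
  have hconv : Convex ℝ (Metric.closedBall ξ r) := convex_closedBall ξ r
  have hlip : ∀ z ∈ Metric.closedBall ξ r, ‖deriv φ z - a‖ ≤ M₀ * r := by
    intro z hz
    have h1 : ‖deriv φ z - deriv φ ξ‖ ≤ M₀ * ‖z - ξ‖ := by
      refine hconv.norm_image_sub_le_of_norm_hasDerivWithin_le
        (f' := deriv (deriv φ)) (fun x hx => ?_) (fun x hx => hMbound x (hcbT hx))
        hξcb hz
      exact (hφ' x (hcbU hx)).differentiableAt.hasDerivAt.hasDerivWithinAt
    have h2 : ‖z - ξ‖ ≤ r := by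
      rw [← dist_eq_norm]; exact Metric.mem_closedBall.1 hz
    calc ‖deriv φ z - a‖ = ‖deriv φ z - deriv φ ξ‖ := rfl
      _ ≤ M₀ * ‖z - ξ‖ := h1
      _ ≤ M₀ * r := by nlinarith [norm_nonneg (z - ξ)]
  -- the key quadratic estimate
  have hkey : ∀ x ∈ Metric.closedBall ξ r, ∀ y ∈ Metric.closedBall ξ r,
      ‖φ x - φ y - (x - y) * a‖ ≤ M₀ * r * ‖x - y‖ := by
    intro x hx y hy
    have := hconv.norm_image_sub_le_of_norm_hasDerivWithin_le
      (f := fun z => φ z - z * a) (f' := fun z => deriv φ z - a)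
      (fun z hz => ?_) (fun z hz => hlip z hz) hy hx
    · calc ‖φ x - φ y - (x - y) * a‖ = ‖(φ x - x * a) - (φ y - y * a)‖ := by ring_nf
      _ ≤ M₀ * r * ‖x - y‖ := this
    · have h1 : HasDerivWithinAt φ (deriv φ z) (Metric.closedBall ξ r) z :=
        ((hφ.differentiableAt (hU.mem_nhds (hcbU hz))).hasDerivAt).hasDerivWithinAt
      have h2 : HasDerivWithinAt (fun z : ℂ => z * a) a (Metric.closedBall ξ r) z := by
        simpa using (hasDerivAt_mul_const a).hasDerivWithinAt
          (s := Metric.closedBall ξ r) (x := z)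
      exact h1.sub h2
  constructor
  · -- lower inclusion
    intro w hw
    have hd : dist w (φ ξ) < ‖a‖ * r - (M₀ + 1) * r ^ 2 := Metric.mem_ball.1 hw
    have hd0 : (0:ℝ) ≤ dist w (φ ξ) := dist_nonneg
    have hna : ‖a‖ = ‖a‖ := rfl
    set d : ℝ := dist w (φ ξ) with hdd
    set k : ℝ := ‖a‖ - M₀ * r with hk
    have hkr : d + r ^ 2 ≤ k * r := by
      rw [hk, hna]; nlinarith
    have hkpos : 0 < k := by nlinarith
    have hane : a ≠ 0 := by
      intro h
      rw [hk, h, norm_zero] at hkpos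
      nlinarith
    -- radius r' strictly between d/k and r
    set r' : ℝ := (d / k + r) / 2 with hr'
    have hdkr : d / k < r := by
      rw [div_lt_iff₀ hkpos]; nlinarith
    have hr'r : r' < r := by rw [hr']; linarith
    have hr'pos : 0 < r' := by
      have : 0 ≤ d / k := div_nonneg hd0 hkpos.le
      rw [hr']; linarith
    have hdle : d ≤ k * r' := by
      have h1 : d / k ≤ r' := by rw [hr']; linarith
      calc d = k * (d / k) := by field_simp
        _ ≤ k * r' := by nlinarith
    -- set up the linear equivalence
    set u : ℂˣ := Units.mk0 a hane with hu
    set E : ℂ ≃L[ℂ] ℂ := ContinuousLinearEquiv.unitsEquivAut ℂ u with hE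
    have hEapp : ∀ x : ℂ, (E : ℂ →L[ℂ] ℂ) x = x * a := by
      intro x
      simp [hE, ContinuousLinearEquiv.unitsEquivAut_apply, hu]
    set c : NNReal := Real.toNNReal (M₀ * r) with hc
    have hcc : (c : ℝ) = M₀ * r := Real.coe_toNNReal _ (by positivity)
    have happrox : ApproximatesLinearOn φ (E : ℂ →L[ℂ] ℂ) (Metric.closedBall ξ r) c := by
      intro x hx y hy
      rw [hEapp, hcc]
      exact hkey x hx y hy
    have hnn : ((E.toNonlinearRightInverse.nnnorm : ℝ))⁻¹ = ‖a‖ := by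
      have h1 : (E.toNonlinearRightInverse.nnnorm : ℝ) = ‖(E.symm : ℂ →L[ℂ] ℂ)‖ := rfl
      rw [h1, clm_norm_eq_norm_apply_one]
      have h2 : (E.symm : ℂ →L[ℂ] ℂ) 1 = (1 : ℂ) * ↑u⁻¹ := by
        rw [ContinuousLinearEquiv.coe_coe, hE]
        exact ContinuousLinearEquiv.unitsEquivAut_apply_symm u 1
      rw [h2, one_mul]
      have h3 : ((u⁻¹ : ℂˣ) : ℂ) = a⁻¹ := by simp [hu]
      rw [h3, norm_inv, inv_inv]
    have hsurj := happrox.surjOn_closedBall_of_nonlinearRightInverse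
      E.toNonlinearRightInverse hr'pos.le
      (Metric.closedBall_subset_closedBall hr'r.le)
    have hwmem : w ∈ Metric.closedBall (φ ξ)
        ((((E.toNonlinearRightInverse.nnnorm : ℝ))⁻¹ - (c : ℝ)) * r') := by
      rw [Metric.mem_closedBall, hnn, hcc]
      exact hdle
    obtain ⟨z, hz, hzw⟩ := hsurj hwmem
    exact ⟨z, Metric.closedBall_subset_ball hr'r hz, hzw⟩
  · -- upper inclusion
    intro y hy
    rcases hy with ⟨x, hx, rfl⟩
    have hxcb : x ∈ Metric.closedBall ξ r := Metric.ball_subset_closedBall hx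
    have h1 : ‖φ x - φ ξ - (x - ξ) * a‖ ≤ M₀ * r * ‖x - ξ‖ := hkey x hxcb ξ hξcb
    have h2 : ‖x - ξ‖ < r := by rw [← dist_eq_norm]; exact Metric.mem_ball.1 hx
    have h3 : ‖φ x - φ ξ‖ ≤ ‖φ x - φ ξ - (x - ξ) * a‖ + ‖(x - ξ) * a‖ := by
      have := norm_sub_norm_le (φ x - φ ξ - (x - ξ) * a) (-(x - ξ) * a)
      calc ‖φ x - φ ξ‖ = ‖(φ x - φ ξ - (x - ξ) * a) + (x - ξ) * a‖ := by ring_nf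
        _ ≤ _ := norm_add_le _ _
    have h4 : ‖(x - ξ) * a‖ = ‖x - ξ‖ * ‖a‖ := norm_mul _ _
    have hna : ‖a‖ = ‖a‖ := rfl
    rw [Metric.mem_ball, Complex.dist_eq]
    skip
    have hn0 : 0 ≤ ‖x - ξ‖ := norm_nonneg _
    have hn1 : 0 ≤ ‖a‖ := norm_nonneg _
    nlinarith [mul_le_mul_of_nonneg_left h2.le hn1,
      mul_le_mul_of_nonneg_left h2.le (mul_nonneg hM₀0 hr.le),
      mul_pos hr hr, norm_nonneg (φ x - φ ξ - (x - ξ) * a)]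
end

section
/- For any compact set L ⊆ (0,1)², the double sum ∑_{1 ≤ i,j ≤ n} sin²(πix) sin²(πjy)/(i² + j²) is asymptotic to (π/8) log n as n → ∞, uniformly in (x,y) ∈ L. That is, (∑_{1 ≤ i,j ≤ n} sin²(πix)sin²(πjy)/(i²+j²)) / ((π/8) log n) → 1 uniformly for (x,y) ∈ L. -/
open Filter Finset Real

/-! ### Auxiliary lemmas -/

lemma icc_one_sum (f : ℕ → ℝ) (m : ℕ) :
    ∑ i ∈ Icc 1 m, f i = ∑ k ∈ range m, f (k+1) := by
  rw [← Finset.Ico_add_one_right_eq_Icc, Finset.sum_Ico_eq_sum_range]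
  simp [add_comm]

/-- Abel's inequality. -/
lemma abel_ineq (n : ℕ) (c a : ℕ → ℝ) (B : ℝ)
    (hC : ∀ m, 1 ≤ m → m ≤ n → |∑ i ∈ Icc 1 m, c i| ≤ B)
    (ha0 : ∀ i, 1 ≤ i → i ≤ n → 0 ≤ a i)
    (hamono : ∀ i, 1 ≤ i → i + 1 ≤ n → a (i+1) ≤ a i)
    (hB : 0 ≤ B) (ha1 : 0 ≤ a 1) :
    |∑ i ∈ Icc 1 n, c i * a i| ≤ B * a 1 := by
  rcases Nat.eq_zero_or_pos n with rfl | hn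
  · simp [mul_nonneg hB ha1]
  have key : ∑ i ∈ Icc 1 n, c i * a i = ∑ k ∈ range n, a (k+1) * c (k+1) := by
    rw [icc_one_sum]
    exact Finset.sum_congr rfl fun k _ => mul_comm _ _
  rw [key]
  have hby := Finset.sum_range_by_parts (fun k => a (k+1)) (fun k => c (k+1)) n
  simp only [smul_eq_mul] at hby
  rw [hby]
  have hG : ∀ m, 1 ≤ m → m ≤ n → |∑ k ∈ range m, c (k+1)| ≤ B := by
    intro m hm1 hmn
    rw [← icc_one_sum]; exact hC m hm1 hmn
  have han : 0 ≤ a (n-1+1) := ha0 _ (Nat.le_add_left 1 _) (by omega)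
  have h1 : |a (n-1+1) * ∑ k ∈ range n, c (k+1)| ≤ B * a (n-1+1) := by
    rw [abs_mul, abs_of_nonneg han, mul_comm]
    exact mul_le_mul_of_nonneg_right (hG n hn le_rfl) han
  have h2 : |∑ k ∈ range (n-1), (a (k+1+1) - a (k+1)) * ∑ j ∈ range (k+1), c (j+1)|
      ≤ B * (a 1 - a (n-1+1)) := by
    calc |∑ k ∈ range (n-1), (a (k+1+1) - a (k+1)) * ∑ j ∈ range (k+1), c (j+1)|
        ≤ ∑ k ∈ range (n-1), |(a (k+1+1) - a (k+1)) * ∑ j ∈ range (k+1), c (j+1)| :=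
          Finset.abs_sum_le_sum_abs _ _
      _ ≤ ∑ k ∈ range (n-1), (a (k+1) - a (k+1+1)) * B := by
          apply Finset.sum_le_sum
          intro k hk
          rw [Finset.mem_range] at hk
          rw [abs_mul]
          have hmono := hamono (k+1) (Nat.le_add_left 1 _) (by omega)
          rw [abs_of_nonpos (by linarith), neg_sub]
          exact mul_le_mul (le_refl _) (hG (k+1) (Nat.le_add_left 1 _) (by omega))
            (abs_nonneg _) (by linarith)
      _ = (a 1 - a (n-1+1)) * B := by
          rw [← Finset.sum_mul, Finset.sum_range_sub' (fun k => a (k+1)) (n-1)]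
      _ = B * (a 1 - a (n-1+1)) := mul_comm _ _
  calc |a (n-1+1) * (∑ k ∈ range n, c (k+1))
        - ∑ k ∈ range (n-1), (a (k+1+1) - a (k+1)) * ∑ j ∈ range (k+1), c (j+1)|
      ≤ _ + _ := abs_sub _ _
    _ ≤ B * a (n-1+1) + B * (a 1 - a (n-1+1)) := add_le_add h1 h2
    _ = B * a 1 := by ring

/-- Bound on partial sums of cosines. -/
lemma cos_sum_bound (θ : ℝ) (hs : 0 < Real.sin (θ/2)) (m : ℕ) :
    |∑ i ∈ Icc 1 m, Real.cos (i * θ)| ≤ 1 / Real.sin (θ/2) := by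
  set s := Real.sin (θ/2) with hsdef
  have key : ∀ k : ℕ, Real.sin (((k:ℝ)+1 + 1/2)*θ) - Real.sin (((k:ℝ) + 1/2)*θ)
      = 2 * s * Real.cos (((k:ℝ)+1) * θ) := by
    intro k
    rw [Real.sin_sub_sin]
    have h1 : (((k:ℝ)+1 + 1/2)*θ - ((k:ℝ) + 1/2)*θ)/2 = θ/2 := by ring
    have h2 : (((k:ℝ)+1 + 1/2)*θ + ((k:ℝ) + 1/2)*θ)/2 = ((k:ℝ)+1)*θ := by ring
    rw [h1, h2]
  have hsum : 2 * s * ∑ i ∈ Icc 1 m, Real.cos (i * θ)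
      = Real.sin (((m:ℝ) + 1/2)*θ) - Real.sin ((1/2)*θ) := by
    rw [← Finset.Ico_add_one_right_eq_Icc, Finset.sum_Ico_eq_sum_range]
    rw [Finset.mul_sum]
    simp only [Nat.add_sub_cancel]
    have : ∀ k ∈ range m, 2 * s * Real.cos ((((1+k : ℕ)):ℝ) * θ)
        = (fun k : ℕ => Real.sin (((k:ℝ) + 1/2)*θ)) (k+1)
          - (fun k : ℕ => Real.sin (((k:ℝ) + 1/2)*θ)) k := by
      intro k _
      simp only [Nat.cast_add, Nat.cast_one]
      rw [add_comm (1:ℝ) (k:ℝ)]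
      exact (key k).symm
    have tele := Finset.sum_range_sub (fun k : ℕ => Real.sin (((k:ℝ) + 1/2)*θ)) m
    rw [Finset.sum_congr rfl this, tele]
    norm_num
  have h1 : |Real.sin (((m:ℝ) + 1/2)*θ) - Real.sin ((1/2)*θ)| ≤ 2 := by
    have := Real.neg_one_le_sin (((m:ℝ) + 1/2)*θ)
    have := Real.sin_le_one (((m:ℝ) + 1/2)*θ)
    have := Real.neg_one_le_sin ((1/2)*θ)
    have := Real.sin_le_one ((1/2)*θ)
    rw [abs_le]; constructor <;> linarith
  have h2 : |2 * s * ∑ i ∈ Icc 1 m, Real.cos (i * θ)| ≤ 2 := by rw [hsum]; exact h1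
  rw [abs_mul, abs_of_pos (by positivity : (0:ℝ) < 2*s)] at h2
  rw [le_div_iff₀ hs]
  calc |∑ i ∈ Icc 1 m, Real.cos (i * θ)| * s
      = (2 * s * |∑ i ∈ Icc 1 m, Real.cos (i * θ)|) / 2 := by ring
    _ ≤ 2 / 2 := by linarith
    _ = 1 := by norm_num

lemma arctan_diff_le {a b : ℝ} (ha : 0 ≤ a) (hab : a ≤ b) :
    Real.arctan b - Real.arctan a ≤ (b - a)/(1 + a^2) := by
  have hdiff : ∀ x : ℝ, HasDerivAt (fun t : ℝ => t / (1 + a^2) - arctan t)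
      (1/(1+a^2) - 1/(1+x^2)) x :=
    fun x => ((hasDerivAt_id x).div_const (1+a^2)).sub (Real.hasDerivAt_arctan x)
  have hmono : MonotoneOn (fun t : ℝ => t / (1 + a^2) - arctan t) (Set.Icc a b) := by
    apply monotoneOn_of_deriv_nonneg (convex_Icc a b)
    · exact (Continuous.sub (continuous_id.div_const _) Real.continuous_arctan).continuousOn
    · exact fun x _ => ((hdiff x).differentiableAt).differentiableWithinAt
    · intro x hx
      rw [interior_Icc] at hx
      rw [(hdiff x).deriv]
      have h1 : 1 + a^2 ≤ 1 + x^2 := by nlinarith [hx.1, hx.2]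
      have h2 : (0:ℝ) < 1 + a^2 := by positivity
      have := one_div_le_one_div_of_le h2 h1
      linarith
  have := hmono (Set.left_mem_Icc.mpr hab) (Set.right_mem_Icc.mpr hab) hab
  simp only at this
  rw [sub_div]
  linarith

lemma le_arctan_diff {a b : ℝ} (ha : 0 ≤ a) (hab : a ≤ b) :
    (b - a)/(1 + b^2) ≤ Real.arctan b - Real.arctan a := by
  have hdiff : ∀ x : ℝ, HasDerivAt (fun t : ℝ => arctan t - t / (1 + b^2))
      (1/(1+x^2) - 1/(1+b^2)) x :=
    fun x => (Real.hasDerivAt_arctan x).sub ((hasDerivAt_id x).div_const (1+b^2))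
  have hmono : MonotoneOn (fun t : ℝ => arctan t - t / (1 + b^2)) (Set.Icc a b) := by
    apply monotoneOn_of_deriv_nonneg (convex_Icc a b)
    · exact (Real.continuous_arctan.sub (continuous_id.div_const _)).continuousOn
    · exact fun x _ => ((hdiff x).differentiableAt).differentiableWithinAt
    · intro x hx
      rw [interior_Icc] at hx
      rw [(hdiff x).deriv]
      have h1 : 1 + x^2 ≤ 1 + b^2 := by nlinarith [hx.1, hx.2, ha]
      have h2 : (0:ℝ) < 1 + x^2 := by positivity
      have := one_div_le_one_div_of_le h2 h1
      linarith
  have := hmono (Set.left_mem_Icc.mpr hab) (Set.right_mem_Icc.mpr hab) hab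
  simp only at this
  rw [sub_div]
  linarith

lemma my_arctan_le_self {x : ℝ} (hx : 0 ≤ x) : Real.arctan x ≤ x := by
  have := arctan_diff_le (le_refl 0) hx
  simp [Real.arctan_zero] at this
  simpa using this

lemma sum_inv_sq_le (n : ℕ) : ∑ i ∈ Icc 1 n, 1/((i:ℝ)^2) ≤ 2 := by
  have step : ∀ i ∈ Icc 1 n, 1/((i:ℝ)^2)
      ≤ (fun k : ℕ => 2/((k:ℝ)+1)) (i-1) - (fun k : ℕ => 2/((k:ℝ)+1)) (i-1+1) := by
    intro i hi
    have hi1 : 1 ≤ i := (Finset.mem_Icc.mp hi).1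
    have hn1 : i - 1 + 1 = i := by omega
    simp only [hn1]
    have hi0 : (1:ℝ) ≤ (i:ℝ) := by exact_mod_cast hi1
    have hcast : ((i-1 : ℕ):ℝ) = (i:ℝ) - 1 := by
      push_cast [Nat.cast_sub hi1]; ring
    rw [hcast, show (i:ℝ) - 1 + 1 = (i:ℝ) by ring]
    have h2 : 2/(i:ℝ) - 2/((i:ℝ)+1) = 2/((i:ℝ)*((i:ℝ)+1)) := by
      field_simp
      ring
    rw [h2, div_le_div_iff₀ (by positivity) (by positivity)]
    nlinarith
  calc ∑ i ∈ Icc 1 n, 1/((i:ℝ)^2)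
      ≤ ∑ i ∈ Icc 1 n, ((fun k : ℕ => 2/((k:ℝ)+1)) (i-1) - (fun k : ℕ => 2/((k:ℝ)+1)) (i-1+1)) :=
        Finset.sum_le_sum step
    _ = ∑ k ∈ range n, ((fun k : ℕ => 2/((k:ℝ)+1)) k - (fun k : ℕ => 2/((k:ℝ)+1)) (k+1)) := by
        rw [icc_one_sum]
        exact Finset.sum_congr rfl fun k _ => by simp
    _ = (fun k : ℕ => 2/((k:ℝ)+1)) 0 - (fun k : ℕ => 2/((k:ℝ)+1)) n :=
        Finset.sum_range_sub' (fun k : ℕ => 2/((k:ℝ)+1)) n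
    _ ≤ 2 := by
        have h : (0:ℝ) ≤ 2/((n:ℝ)+1) := by positivity
        simp only [Nat.cast_zero]
        norm_num
        linarith

lemma row_upper (i n : ℕ) (hi : 1 ≤ i) :
    ∑ j ∈ Icc 1 n, 1/((i:ℝ)^2 + (j:ℝ)^2) ≤ π/2 * (1/(i:ℝ)) := by
  have hi0 : (0:ℝ) < i := by exact_mod_cast hi
  have step : ∀ j ∈ Icc 1 n, 1/((i:ℝ)^2 + (j:ℝ)^2)
      ≤ (1/(i:ℝ)) * (arctan ((j:ℝ)/i) - arctan (((j:ℝ)-1)/i)) := by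
    intro j hj
    have hj1 : (1:ℝ) ≤ (j:ℝ) := by exact_mod_cast (Finset.mem_Icc.mp hj).1
    have ha : 0 ≤ ((j:ℝ)-1)/i := div_nonneg (by linarith) hi0.le
    have hab : ((j:ℝ)-1)/i ≤ (j:ℝ)/i := by gcongr; linarith
    have h := le_arctan_diff ha hab
    have hkey : ((j:ℝ)/i - ((j:ℝ)-1)/i)/(1 + ((j:ℝ)/i)^2) = (i:ℝ)/((i:ℝ)^2+(j:ℝ)^2) := by
      field_simp
      ring
    rw [hkey] at h
    calc 1/((i:ℝ)^2 + (j:ℝ)^2) = (1/(i:ℝ)) * ((i:ℝ)/((i:ℝ)^2+(j:ℝ)^2)) := by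
          field_simp
      _ ≤ (1/(i:ℝ)) * (arctan ((j:ℝ)/i) - arctan (((j:ℝ)-1)/i)) :=
          mul_le_mul_of_nonneg_left h (by positivity)
  calc ∑ j ∈ Icc 1 n, 1/((i:ℝ)^2 + (j:ℝ)^2)
      ≤ ∑ j ∈ Icc 1 n, (1/(i:ℝ)) * (arctan ((j:ℝ)/i) - arctan (((j:ℝ)-1)/i)) :=
        Finset.sum_le_sum step
    _ = (1/(i:ℝ)) * ∑ j ∈ Icc 1 n, (arctan ((j:ℝ)/i) - arctan (((j:ℝ)-1)/i)) :=
        (Finset.mul_sum _ _ _).symm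
    _ = (1/(i:ℝ)) * arctan ((n:ℝ)/i) := by
        congr 1
        rw [icc_one_sum]
        have hc : ∀ k ∈ range n, arctan (((k+1:ℕ):ℝ)/i) - arctan ((((k+1:ℕ):ℝ)-1)/i)
            = (fun k : ℕ => arctan ((k:ℝ)/i)) (k+1) - (fun k : ℕ => arctan ((k:ℝ)/i)) k := by
          intro k _
          push_cast
          norm_num
        have tele := Finset.sum_range_sub (fun k : ℕ => arctan ((k:ℝ)/i)) n
        rw [Finset.sum_congr rfl hc, tele]
        simp [Real.arctan_zero]
    _ ≤ (1/(i:ℝ)) * (π/2) :=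
        mul_le_mul_of_nonneg_left (Real.arctan_lt_pi_div_two _).le (by positivity)
    _ = π/2 * (1/(i:ℝ)) := mul_comm _ _

lemma row_lower (i n : ℕ) (hi : 1 ≤ i) :
    (1/(i:ℝ)) * (arctan (((n:ℝ)+1)/i) - arctan (1/(i:ℝ)))
      ≤ ∑ j ∈ Icc 1 n, 1/((i:ℝ)^2 + (j:ℝ)^2) := by
  have hi0 : (0:ℝ) < i := by exact_mod_cast hi
  have step : ∀ j ∈ Icc 1 n,
      (1/(i:ℝ)) * (arctan (((j:ℝ)+1)/i) - arctan ((j:ℝ)/i)) ≤ 1/((i:ℝ)^2 + (j:ℝ)^2) := by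
    intro j hj
    have hj1 : (1:ℝ) ≤ (j:ℝ) := by exact_mod_cast (Finset.mem_Icc.mp hj).1
    have ha : 0 ≤ (j:ℝ)/i := by positivity
    have hab : (j:ℝ)/i ≤ ((j:ℝ)+1)/i := by gcongr; linarith
    have h := arctan_diff_le ha hab
    have hkey : (((j:ℝ)+1)/i - (j:ℝ)/i)/(1 + ((j:ℝ)/i)^2) = (i:ℝ)/((i:ℝ)^2+(j:ℝ)^2) := by
      field_simp
      ring
    rw [hkey] at h
    calc (1/(i:ℝ)) * (arctan (((j:ℝ)+1)/i) - arctan ((j:ℝ)/i))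
        ≤ (1/(i:ℝ)) * ((i:ℝ)/((i:ℝ)^2+(j:ℝ)^2)) := mul_le_mul_of_nonneg_left h (by positivity)
      _ = 1/((i:ℝ)^2 + (j:ℝ)^2) := by field_simp
  calc (1/(i:ℝ)) * (arctan (((n:ℝ)+1)/i) - arctan (1/(i:ℝ)))
      = (1/(i:ℝ)) * ∑ j ∈ Icc 1 n, (arctan (((j:ℝ)+1)/i) - arctan ((j:ℝ)/i)) := by
        congr 1
        rw [icc_one_sum]
        have hc : ∀ k ∈ range n, arctan ((((k+1:ℕ):ℝ)+1)/i) - arctan (((k+1:ℕ):ℝ)/i)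
            = (fun k : ℕ => arctan (((k:ℝ)+1)/i)) (k+1) - (fun k : ℕ => arctan (((k:ℝ)+1)/i)) k := by
          intro k _
          push_cast
          norm_num
        have tele := Finset.sum_range_sub (fun k : ℕ => arctan (((k:ℝ)+1)/i)) n
        rw [Finset.sum_congr rfl hc, tele]
        norm_num
    _ = ∑ j ∈ Icc 1 n, (1/(i:ℝ)) * (arctan (((j:ℝ)+1)/i) - arctan ((j:ℝ)/i)) :=
        Finset.mul_sum _ _ _
    _ ≤ ∑ j ∈ Icc 1 n, 1/((i:ℝ)^2 + (j:ℝ)^2) := Finset.sum_le_sum step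

lemma An_upper (n : ℕ) :
    ∑ i ∈ Icc 1 n, ∑ j ∈ Icc 1 n, 1/((i:ℝ)^2 + (j:ℝ)^2)
      ≤ π/2 * ∑ i ∈ Icc 1 n, 1/(i:ℝ) := by
  rw [Finset.mul_sum]
  exact Finset.sum_le_sum fun i hi => row_upper i n (Finset.mem_Icc.mp hi).1

lemma An_lower (n : ℕ) :
    π/2 * (∑ i ∈ Icc 1 n, 1/(i:ℝ)) - 3
      ≤ ∑ i ∈ Icc 1 n, ∑ j ∈ Icc 1 n, 1/((i:ℝ)^2 + (j:ℝ)^2) := by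
  have step : ∀ i ∈ Icc 1 n, π/2 * (1/(i:ℝ)) - 1/((n:ℝ)+1) - 1/((i:ℝ)^2)
      ≤ ∑ j ∈ Icc 1 n, 1/((i:ℝ)^2 + (j:ℝ)^2) := by
    intro i hi
    have hi1 : 1 ≤ i := (Finset.mem_Icc.mp hi).1
    have hi0 : (0:ℝ) < i := by exact_mod_cast hi1
    refine le_trans ?_ (row_lower i n hi1)
    have e1 : arctan (((n:ℝ)+1)/i) = π/2 - arctan ((i:ℝ)/((n:ℝ)+1)) := by
      rw [show ((n:ℝ)+1)/i = ((i:ℝ)/((n:ℝ)+1))⁻¹ by rw [inv_div], Real.arctan_inv_of_pos (by positivity)]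
    have b1 : arctan ((i:ℝ)/((n:ℝ)+1)) ≤ (i:ℝ)/((n:ℝ)+1) := my_arctan_le_self (by positivity)
    have b2 : arctan (1/(i:ℝ)) ≤ 1/(i:ℝ) := my_arctan_le_self (by positivity)
    rw [e1]
    have hbr : π/2 - (i:ℝ)/((n:ℝ)+1) - 1/(i:ℝ)
        ≤ π/2 - arctan ((i:ℝ)/((n:ℝ)+1)) - arctan (1/(i:ℝ)) := by linarith
    calc π/2 * (1/(i:ℝ)) - 1/((n:ℝ)+1) - 1/((i:ℝ)^2)
        = (1/(i:ℝ)) * (π/2 - (i:ℝ)/((n:ℝ)+1) - 1/(i:ℝ)) := by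
          field_simp
      _ ≤ (1/(i:ℝ)) * (π/2 - arctan ((i:ℝ)/((n:ℝ)+1)) - arctan (1/(i:ℝ))) :=
          mul_le_mul_of_nonneg_left hbr (by positivity)
      _ = (1/(i:ℝ)) * ((π/2 - arctan ((i:ℝ)/((n:ℝ)+1))) - arctan (1/(i:ℝ))) := by ring
  have hsum := Finset.sum_le_sum step
  have hcard : (Icc 1 n).card = n := by rw [Nat.card_Icc]; omega
  have hexp : ∑ i ∈ Icc 1 n, (π/2 * (1/(i:ℝ)) - 1/((n:ℝ)+1) - 1/((i:ℝ)^2))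
      = π/2 * (∑ i ∈ Icc 1 n, 1/(i:ℝ)) - (n:ℝ) * (1/((n:ℝ)+1)) - ∑ i ∈ Icc 1 n, 1/((i:ℝ)^2) := by
    rw [Finset.sum_sub_distrib, Finset.sum_sub_distrib, ← Finset.mul_sum,
      Finset.sum_const, hcard]
    simp [nsmul_eq_mul]
  rw [hexp] at hsum
  have h2 := sum_inv_sq_le n
  have h3 : (n:ℝ) * (1/((n:ℝ)+1)) ≤ 1 := by
    rw [mul_one_div, div_le_one (by positivity)]
    linarith
  linarith

lemma harmonic_log_bounds (n : ℕ) (hn : 1 ≤ n) :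
    Real.log n ≤ ∑ i ∈ Icc 1 n, 1/(i:ℝ) ∧ ∑ i ∈ Icc 1 n, 1/(i:ℝ) ≤ 1 + Real.log n := by
  have hcast : (harmonic n : ℝ) = ∑ i ∈ Icc 1 n, 1/(i:ℝ) := by
    rw [harmonic_eq_sum_Icc]
    push_cast
    simp [one_div]
  constructor
  · have h1 := log_add_one_le_harmonic n
    rw [hcast] at h1
    refine le_trans ?_ h1
    apply Real.log_le_log (by positivity)
    push_cast
    linarith
  · have h2 := harmonic_le_one_add_log n
    rw [hcast] at h2
    exact h2

lemma sin_bound {δ x : ℝ} (hδ : 0 < δ) (h1 : δ ≤ x) (h2 : x ≤ 1 - δ) :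
    Real.sin (π*δ) ≤ Real.sin (π*x) := by
  have hδhalf : δ ≤ 1/2 := by linarith
  have hπ := Real.pi_pos
  rcases le_or_gt x (1/2) with hx | hx
  · apply Real.sin_le_sin_of_le_of_le_pi_div_two
    · nlinarith
    · nlinarith
    · nlinarith
  · rw [show π*x = π - π*(1-x) by ring, Real.sin_pi_sub]
    apply Real.sin_le_sin_of_le_of_le_pi_div_two
    · nlinarith
    · nlinarith
    · nlinarith

lemma sin_delta_pos {δ : ℝ} (hδ : 0 < δ) (hδ' : δ ≤ 1/2) : 0 < Real.sin (π*δ) := by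
  have hπ := Real.pi_pos
  apply Real.sin_pos_of_pos_of_lt_pi
  · positivity
  · nlinarith

lemma cos_partial_bound {δ x : ℝ} (hδ : 0 < δ) (hx1 : δ ≤ x) (hx2 : x ≤ 1-δ) (m : ℕ) :
    |∑ i ∈ Icc 1 m, Real.cos ((i:ℝ) * (2*π*x))| ≤ 1/Real.sin (π*δ) := by
  have hs := sin_bound hδ hx1 hx2
  have hsδ : 0 < Real.sin (π*δ) := sin_delta_pos hδ (by linarith)
  have hsx : 0 < Real.sin ((2*π*x)/2) := by
    rw [show (2*π*x)/2 = π*x by ring]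
    exact lt_of_lt_of_le hsδ hs
  have h := cos_sum_bound (2*π*x) hsx m
  rw [show (2*π*x)/2 = π*x by ring] at h
  exact h.trans (one_div_le_one_div_of_le hsδ hs)

lemma term_expand (x y : ℝ) (i j : ℕ) (hi : 1 ≤ i) :
    Real.sin (π*i*x)^2 * Real.sin (π*j*y)^2 / ((i:ℝ)^2 + (j:ℝ)^2)
    = (1/4)*(1/((i:ℝ)^2+(j:ℝ)^2))
      - (1/4)*(Real.cos ((i:ℝ)*(2*π*x)) * (1/((i:ℝ)^2+(j:ℝ)^2)))
      - (1/4)*(Real.cos ((j:ℝ)*(2*π*y)) * (1/((i:ℝ)^2+(j:ℝ)^2)))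
      + (1/4)*(Real.cos ((i:ℝ)*(2*π*x)) * (Real.cos ((j:ℝ)*(2*π*y)) * (1/((i:ℝ)^2+(j:ℝ)^2)))) := by
  have hi0 : (0:ℝ) < i := by exact_mod_cast hi
  have hd : ((i:ℝ)^2 + (j:ℝ)^2) ≠ 0 := by positivity
  rw [Real.sin_sq_eq_half_sub, Real.sin_sq_eq_half_sub,
    show 2*(π*(i:ℝ)*x) = (i:ℝ)*(2*π*x) by ring,
    show 2*(π*(j:ℝ)*y) = (j:ℝ)*(2*π*y) by ring]
  field_simp
  ring

set_option maxHeartbeats 1000000 in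
lemma key_bound {δ : ℝ} (hδ : 0 < δ) {x y : ℝ}
    (hx1 : δ ≤ x) (hx2 : x ≤ 1-δ) (hy1 : δ ≤ y) (hy2 : y ≤ 1-δ) (n : ℕ) (hn : 1 ≤ n) :
    |(∑ i ∈ Icc 1 n, ∑ j ∈ Icc 1 n,
        Real.sin (π*i*x)^2 * Real.sin (π*j*y)^2 / ((i:ℝ)^2+(j:ℝ)^2))
      - π/8 * Real.log n| ≤ 2 + 2*(1/Real.sin (π*δ)) := by
  have hδhalf : δ ≤ 1/2 := by linarith
  have hsδ : 0 < Real.sin (π*δ) := sin_delta_pos hδ hδhalf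
  set B : ℝ := 1/Real.sin (π*δ) with hBdef
  have hB0 : 0 ≤ B := by positivity
  -- abbreviations
  set A := ∑ i ∈ Icc 1 n, ∑ j ∈ Icc 1 n, 1/((i:ℝ)^2+(j:ℝ)^2) with hA
  set V := ∑ i ∈ Icc 1 n, Real.cos ((i:ℝ)*(2*π*x)) * (∑ j ∈ Icc 1 n, 1/((i:ℝ)^2+(j:ℝ)^2)) with hV
  set W := ∑ i ∈ Icc 1 n, ∑ j ∈ Icc 1 n, Real.cos ((j:ℝ)*(2*π*y)) * (1/((i:ℝ)^2+(j:ℝ)^2)) with hW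
  set Z := ∑ i ∈ Icc 1 n, Real.cos ((i:ℝ)*(2*π*x)) *
      (∑ j ∈ Icc 1 n, Real.cos ((j:ℝ)*(2*π*y)) * (1/((i:ℝ)^2+(j:ℝ)^2))) with hZ
  have hsplit : (∑ i ∈ Icc 1 n, ∑ j ∈ Icc 1 n,
      Real.sin (π*i*x)^2 * Real.sin (π*j*y)^2 / ((i:ℝ)^2+(j:ℝ)^2))
      = (1/4)*A - (1/4)*V - (1/4)*W + (1/4)*Z := by
    rw [hA, hV, hW, hZ]
    rw [Finset.sum_congr rfl (fun i hi => Finset.sum_congr rfl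
      (fun j _ => term_expand x y i j (Finset.mem_Icc.mp hi).1))]
    simp only [Finset.sum_add_distrib, Finset.sum_sub_distrib, ← Finset.mul_sum]
  -- bounds on sums of 1/(i^2+j^2)
  have hinv2 : ∀ m : ℕ, ∑ j ∈ Icc 1 m, 1/(1+(j:ℝ)^2) ≤ 2 := by
    intro m
    refine le_trans (Finset.sum_le_sum ?_) (sum_inv_sq_le m)
    intro j hj
    have hj1 : (1:ℝ) ≤ (j:ℝ) := by exact_mod_cast (Finset.mem_Icc.mp hj).1
    apply one_div_le_one_div_of_le (by positivity)
    nlinarith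
  -- V bound
  have hVb : |V| ≤ B * 2 := by
    have habel := abel_ineq n (fun i => Real.cos ((i:ℝ)*(2*π*x)))
      (fun i => ∑ j ∈ Icc 1 n, 1/((i:ℝ)^2+(j:ℝ)^2)) B
      (fun m hm1 hmn => cos_partial_bound hδ hx1 hx2 m)
      (fun i _ _ => Finset.sum_nonneg fun j _ => by positivity)
      (fun i hi1 hin => Finset.sum_le_sum fun j _ => by
        apply one_div_le_one_div_of_le (by positivity)
        push_cast
        nlinarith [(Nat.cast_nonneg i : (0:ℝ) ≤ i)])
      hB0 (Finset.sum_nonneg fun j _ => by positivity)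
    refine habel.trans ?_
    apply mul_le_mul_of_nonneg_left _ hB0
    calc ∑ j ∈ Icc 1 n, 1/(((1:ℕ):ℝ)^2+(j:ℝ)^2) = ∑ j ∈ Icc 1 n, 1/(1+(j:ℝ)^2) := by
          norm_num
      _ ≤ 2 := hinv2 n
  -- W bound
  have hWb : |W| ≤ B * 2 := by
    rw [hW, Finset.sum_comm]
    have hrw : ∀ j : ℕ, ∑ i ∈ Icc 1 n, Real.cos ((j:ℝ)*(2*π*y)) * (1/((i:ℝ)^2+(j:ℝ)^2))
        = Real.cos ((j:ℝ)*(2*π*y)) * (∑ i ∈ Icc 1 n, 1/((i:ℝ)^2+(j:ℝ)^2)) :=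
      fun j => (Finset.mul_sum _ _ _).symm
    rw [Finset.sum_congr rfl fun j _ => hrw j]
    have habel := abel_ineq n (fun j => Real.cos ((j:ℝ)*(2*π*y)))
      (fun j => ∑ i ∈ Icc 1 n, 1/((i:ℝ)^2+(j:ℝ)^2)) B
      (fun m hm1 hmn => cos_partial_bound hδ hy1 hy2 m)
      (fun j _ _ => Finset.sum_nonneg fun i _ => by positivity)
      (fun j hj1 hjn => Finset.sum_le_sum fun i _ => by
        apply one_div_le_one_div_of_le (by positivity)
        push_cast
        nlinarith [(Nat.cast_nonneg j : (0:ℝ) ≤ j)])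
      hB0 (Finset.sum_nonneg fun i _ => by positivity)
    refine habel.trans ?_
    apply mul_le_mul_of_nonneg_left _ hB0
    calc ∑ i ∈ Icc 1 n, 1/((i:ℝ)^2+((1:ℕ):ℝ)^2) = ∑ i ∈ Icc 1 n, 1/(1+(i:ℝ)^2) := by
          norm_num [add_comm]
      _ ≤ 2 := hinv2 n
  -- Z bound
  have hZb : |Z| ≤ B * 2 := by
    have hinner : ∀ i : ℕ, 1 ≤ i →
        |∑ j ∈ Icc 1 n, Real.cos ((j:ℝ)*(2*π*y)) * (1/((i:ℝ)^2+(j:ℝ)^2))|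
          ≤ B * (1/((i:ℝ)^2+1)) := by
      intro i hi1
      have habel := abel_ineq n (fun j => Real.cos ((j:ℝ)*(2*π*y)))
        (fun j => 1/((i:ℝ)^2+(j:ℝ)^2)) B
        (fun m hm1 hmn => cos_partial_bound hδ hy1 hy2 m)
        (fun j _ _ => by positivity)
        (fun j hj1 hjn => by
          apply one_div_le_one_div_of_le (by positivity)
          push_cast
          nlinarith [(Nat.cast_nonneg j : (0:ℝ) ≤ j)])
        hB0 (by positivity)
      refine habel.trans ?_
      norm_num
    calc |Z| ≤ ∑ i ∈ Icc 1 n, |Real.cos ((i:ℝ)*(2*π*x)) *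
          (∑ j ∈ Icc 1 n, Real.cos ((j:ℝ)*(2*π*y)) * (1/((i:ℝ)^2+(j:ℝ)^2)))| :=
        Finset.abs_sum_le_sum_abs _ _
      _ ≤ ∑ i ∈ Icc 1 n, B * (1/((i:ℝ)^2+1)) := by
        apply Finset.sum_le_sum
        intro i hi
        rw [abs_mul]
        calc |Real.cos ((i:ℝ)*(2*π*x))| * |∑ j ∈ Icc 1 n, Real.cos ((j:ℝ)*(2*π*y)) * (1/((i:ℝ)^2+(j:ℝ)^2))|
            ≤ 1 * (B * (1/((i:ℝ)^2+1))) :=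
              mul_le_mul (Real.abs_cos_le_one _) (hinner i (Finset.mem_Icc.mp hi).1)
                (abs_nonneg _) zero_le_one
          _ = B * (1/((i:ℝ)^2+1)) := one_mul _
      _ = B * ∑ i ∈ Icc 1 n, 1/((i:ℝ)^2+1) := (Finset.mul_sum _ _ _).symm
      _ ≤ B * 2 := by
        apply mul_le_mul_of_nonneg_left _ hB0
        calc ∑ i ∈ Icc 1 n, 1/((i:ℝ)^2+1) = ∑ i ∈ Icc 1 n, 1/(1+(i:ℝ)^2) := by
              simp [add_comm]
          _ ≤ 2 := hinv2 n
  -- A bounds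
  set H := ∑ i ∈ Icc 1 n, 1/(i:ℝ) with hH
  have hAu : A ≤ π/2 * H := An_upper n
  have hAl : π/2 * H - 3 ≤ A := An_lower n
  have hHlog := harmonic_log_bounds n hn
  have hπ4 := Real.pi_le_four
  have hπ0 := Real.pi_pos
  have hmul1 : π/8 * H ≤ π/8 + π/8 * Real.log n := by
    have := mul_le_mul_of_nonneg_left hHlog.2 (by positivity : (0:ℝ) ≤ π/8)
    linarith [this]
  have hmul2 : π/8 * Real.log n ≤ π/8 * H := by
    apply mul_le_mul_of_nonneg_left hHlog.1 (by positivity)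
  have hπ8 : π/8 ≤ 1/2 := by linarith
  rw [hsplit]
  have hV' := abs_le.mp hVb
  have hW' := abs_le.mp hWb
  have hZ' := abs_le.mp hZb
  rw [abs_le]
  constructor <;>
    linarith [hV'.1, hV'.2, hW'.1, hW'.2, hZ'.1, hZ'.2, hAu, hAl, hmul1, hmul2, hπ8, hB0]

theorem sine_square_sum_asymptotic
    (L : Set (ℝ × ℝ)) (hL : IsCompact L) (hL' : L ⊆ Set.Ioo 0 1 ×ˢ Set.Ioo 0 1) :
    TendstoUniformlyOn
      (fun (n : ℕ) (p : ℝ × ℝ) =>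
        (∑ i ∈ Finset.Icc 1 n, ∑ j ∈ Finset.Icc 1 n,
            Real.sin (Real.pi * i * p.1) ^ 2 * Real.sin (Real.pi * j * p.2) ^ 2 /
              ((i : ℝ) ^ 2 + (j : ℝ) ^ 2)) /
          (Real.pi / 8 * Real.log n))
      (fun _ => 1) atTop L := by
  rcases L.eq_empty_or_nonempty with rfl | hne
  · exact tendstoUniformlyOn_empty
  have hg : ContinuousOn (fun p : ℝ×ℝ => min (min p.1 (1-p.1)) (min p.2 (1-p.2))) L :=
    ((continuous_fst.min (continuous_const.sub continuous_fst)).min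
      (continuous_snd.min (continuous_const.sub continuous_snd))).continuousOn
  obtain ⟨p₀, hp₀, hmin⟩ := hL.exists_isMinOn hne hg
  set δ := min (min p₀.1 (1-p₀.1)) (min p₀.2 (1-p₀.2)) with hδdef
  obtain ⟨⟨h1, h2⟩, ⟨h3, h4⟩⟩ := hL' hp₀
  have hδ0 : 0 < δ :=
    lt_min (lt_min h1 (by linarith)) (lt_min h3 (by linarith))
  have hbounds : ∀ p ∈ L, δ ≤ p.1 ∧ p.1 ≤ 1-δ ∧ δ ≤ p.2 ∧ p.2 ≤ 1-δ := by
    intro p hp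
    have h := (isMinOn_iff.mp hmin) p hp
    simp only [le_min_iff] at h
    exact ⟨h.1.1, by linarith [h.1.2], h.2.1, by linarith [h.2.2]⟩
  obtain ⟨hc1, hc2, hc3, hc4⟩ := hbounds p₀ hp₀
  have hδhalf : δ ≤ 1/2 := by linarith
  have hs := sin_delta_pos hδ0 hδhalf
  set K := 2 + 2*(1/Real.sin (π*δ)) with hKdef
  have hK0 : 0 < K := by positivity
  rw [Metric.tendstoUniformlyOn_iff]
  intro ε hε
  have hπ := Real.pi_pos
  have htends : Tendsto (fun n : ℕ => Real.log n) atTop atTop :=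
    Real.tendsto_log_atTop.comp tendsto_natCast_atTop_atTop
  filter_upwards [htends.eventually_ge_atTop (K*(8/π)/ε + 1), eventually_ge_atTop 1]
    with n hlogn hn1
  intro p hp
  obtain ⟨hb1, hb2, hb3, hb4⟩ := hbounds p hp
  have hkey := key_bound hδ0 hb1 hb2 hb3 hb4 n hn1
  have hD0 : 0 < π/8 * Real.log n := by
    have h0 : (0:ℝ) < K*(8/π)/ε + 1 := by positivity
    exact mul_pos (by positivity) (lt_of_lt_of_le h0 hlogn)
  have hDK : K/ε < π/8 * Real.log n := by
    have he : π/8 * (K*(8/π)/ε + 1) = K/ε + π/8 := by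
      field_simp
    have hm := mul_le_mul_of_nonneg_left hlogn (by positivity : (0:ℝ) ≤ π/8)
    rw [he] at hm
    linarith
  rw [Real.dist_eq]
  have hfrac : (1:ℝ) - (∑ i ∈ Finset.Icc 1 n, ∑ j ∈ Finset.Icc 1 n,
      Real.sin (Real.pi * i * p.1) ^ 2 * Real.sin (Real.pi * j * p.2) ^ 2 /
        ((i : ℝ) ^ 2 + (j : ℝ) ^ 2)) / (Real.pi / 8 * Real.log n)
      = ((π/8 * Real.log n) - (∑ i ∈ Finset.Icc 1 n, ∑ j ∈ Finset.Icc 1 n,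
        Real.sin (Real.pi * i * p.1) ^ 2 * Real.sin (Real.pi * j * p.2) ^ 2 /
          ((i : ℝ) ^ 2 + (j : ℝ) ^ 2))) / (π/8 * Real.log n) := by
    rw [sub_div, div_self (ne_of_gt hD0)]
  rw [hfrac, abs_div, abs_of_pos hD0, div_lt_iff₀ hD0]
  have hKe : K < ε * (π/8 * Real.log n) := by
    have := (div_lt_iff₀ hε).mp hDK
    linarith
  calc |(π/8 * Real.log n) - _| = |_ - (π/8 * Real.log n)| := abs_sub_comm _ _
    _ ≤ K := hkey
    _ < ε * (π/8 * Real.log n) := hKe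
end

section
/- For z = (x,y) ∈ (0,1)², r > 0 with D(z,r) ⊆ (0,1)², and positive integers i, j, G_{ij}(z,r) = sin(πix) sin(πjy) · (πr² + E), where |E| ≤ C r⁴ (max(i,j))² for a universal constant C. In particular G_{ij}(z,r) = sin(πix)sin(πjy)(πr² + O(r⁴(i∨j)²)). -/
open MeasureTheory Metric

private lemma ball_translate (z : ℂ) (r : ℝ) (F : ℂ → ℝ) :
    ∫ w in ball z r, F w = ∫ w in ball (0:ℂ) r, F (z + w) := by
  have hemb : MeasurableEmbedding (fun w : ℂ => z + w) :=
    (MeasurableEquiv.addLeft z).measurableEmbedding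
  have hmp : MeasurePreserving (fun w : ℂ => z + w) volume volume :=
    measurePreserving_add_left volume z
  have hs : (fun w : ℂ => z + w) ⁻¹' ball z r = ball (0:ℂ) r := by
    ext w; simp [mem_ball, dist_eq_norm]
  rw [← hmp.setIntegral_preimage_emb hemb F (ball z r), hs]

private lemma cont_integrableOn_ball (f : ℂ → ℝ) (hf : Continuous f) (r : ℝ) :
    IntegrableOn f (ball (0:ℂ) r) :=
  (hf.continuousOn.integrableOn_compact (isCompact_closedBall _ _)).mono_set
    ball_subset_closedBall

private lemma odd_vanish (r : ℝ) (e : ℂ ≃ₗᵢ[ℝ] ℂ) (f : ℂ → ℝ)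
    (hf : ∀ w, f (e w) = - f w) :
    ∫ w in ball (0:ℂ) r, f w = 0 := by
  have hmp := LinearIsometryEquiv.measurePreserving e
  have hemb : MeasurableEmbedding (e : ℂ → ℂ) :=
    e.toHomeomorph.measurableEmbedding
  have hs : (e : ℂ → ℂ) ⁻¹' ball (0:ℂ) r = ball (0:ℂ) r := by
    ext w
    simp [mem_ball, dist_eq_norm, e.norm_map]
  have h1 := hmp.setIntegral_preimage_emb hemb f (ball (0:ℂ) r)
  rw [hs] at h1
  have h2 : ∫ w in ball (0:ℂ) r, f (e w) = - ∫ w in ball (0:ℂ) r, f w := by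
    simp_rw [hf]
    exact integral_neg f
  linarith [h1, h2]

private lemma abs_cos_sub_one_le (c : ℝ) : |Real.cos c - 1| ≤ c ^ 2 / 2 := by
  rw [abs_of_nonpos (by linarith [Real.cos_le_one c])]
  linarith [Real.one_sub_sq_div_two_le_cos (x := c)]

theorem disk_sine_integral_expansion :
    ∃ C > 0, ∀ (z : ℂ) (r : ℝ), 0 < r →
      Metric.ball z r ⊆ {w : ℂ | w.re ∈ Set.Ioo (0 : ℝ) 1 ∧ w.im ∈ Set.Ioo (0 : ℝ) 1} →
      ∀ i j : ℕ, 1 ≤ i → 1 ≤ j →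
        ∃ E : ℝ,
          (∫ w in Metric.ball z r,
              Real.sin (Real.pi * i * w.re) * Real.sin (Real.pi * j * w.im))
            = Real.sin (Real.pi * i * z.re) * Real.sin (Real.pi * j * z.im) *
                (Real.pi * r ^ 2 + E) ∧
          |E| ≤ C * r ^ 4 * (max i j : ℝ) ^ 2 := by
  refine ⟨Real.pi ^ 3, by positivity, ?_⟩
  intro z r hr _hsub i j hi hj
  set x := z.re
  set y := z.im
  set sa := Real.sin (Real.pi * i * x) with hsa
  set ca := Real.cos (Real.pi * i * x) with hca
  set sb := Real.sin (Real.pi * j * y) with hsb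
  set cb := Real.cos (Real.pi * j * y) with hcb
  set g1 : ℂ → ℝ := fun w => Real.cos (Real.pi * i * w.re) * Real.cos (Real.pi * j * w.im)
    with hg1
  set g2 : ℂ → ℝ := fun w => Real.cos (Real.pi * i * w.re) * Real.sin (Real.pi * j * w.im)
    with hg2
  set g3 : ℂ → ℝ := fun w => Real.sin (Real.pi * i * w.re) * Real.cos (Real.pi * j * w.im)
    with hg3
  set g4 : ℂ → ℝ := fun w => Real.sin (Real.pi * i * w.re) * Real.sin (Real.pi * j * w.im)
    with hg4
  have hc1 : Continuous g1 := by fun_prop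
  have hc2 : Continuous g2 := by fun_prop
  have hc3 : Continuous g3 := by fun_prop
  have hc4 : Continuous g4 := by fun_prop
  have hI1 := cont_integrableOn_ball g1 hc1 r
  have hI2 := cont_integrableOn_ball g2 hc2 r
  have hI3 := cont_integrableOn_ball g3 hc3 r
  have hI4 := cont_integrableOn_ball g4 hc4 r
  set I1 := ∫ w in ball (0:ℂ) r, g1 w with hI1d
  refine ⟨I1 - Real.pi * r ^ 2, ?_, ?_⟩
  · -- main identity
    rw [ball_translate z r (fun w => Real.sin (Real.pi * i * w.re) * Real.sin (Real.pi * j * w.im))]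
    have hexp : ∀ w : ℂ,
        Real.sin (Real.pi * i * (z + w).re) * Real.sin (Real.pi * j * (z + w).im)
          = sa * sb * g1 w + (sa * cb * g2 w + (ca * sb * g3 w + ca * cb * g4 w)) := by
      intro w
      have h1 : Real.pi * i * (z + w).re = Real.pi * i * x + Real.pi * i * w.re := by
        simp [Complex.add_re]; ring
      have h2 : Real.pi * j * (z + w).im = Real.pi * j * y + Real.pi * j * w.im := by
        simp [Complex.add_im]; ring
      rw [h1, h2, Real.sin_add, Real.sin_add]
      simp only [hg1, hg2, hg3, hg4, hsa, hca, hsb, hcb]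
      ring
    simp_rw [hexp]
    have hA2 : IntegrableOn (fun w : ℂ => sa * cb * g2 w) (ball (0:ℂ) r) := hI2.const_mul _
    have hA3 : IntegrableOn (fun w : ℂ => ca * sb * g3 w) (ball (0:ℂ) r) := hI3.const_mul _
    have hA4 : IntegrableOn (fun w : ℂ => ca * cb * g4 w) (ball (0:ℂ) r) := hI4.const_mul _
    have hA34 : IntegrableOn (fun w : ℂ => ca * sb * g3 w + ca * cb * g4 w) (ball (0:ℂ) r) :=
      hA3.add hA4
    have hA234 : IntegrableOn
        (fun w : ℂ => sa * cb * g2 w + (ca * sb * g3 w + ca * cb * g4 w)) (ball (0:ℂ) r) :=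
      hA2.add hA34
    rw [integral_add (hI1.const_mul (sa * sb)) hA234, integral_add hA2 hA34,
        integral_add hA3 hA4,
        integral_const_mul, integral_const_mul, integral_const_mul, integral_const_mul]
    have h2 : ∫ w in ball (0:ℂ) r, g2 w = 0 := by
      refine odd_vanish r Complex.conjLIE g2 (fun w => ?_)
      simp [hg2, Complex.conjLIE_apply, mul_neg, Real.sin_neg]
    have h3 : ∫ w in ball (0:ℂ) r, g3 w = 0 := by
      refine odd_vanish r (LinearIsometryEquiv.neg ℝ (E := ℂ)) g3 (fun w => ?_)
      simp [hg3, LinearIsometryEquiv.coe_neg, Complex.neg_re, Complex.neg_im,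
        mul_neg, Real.sin_neg]
    have h4 : ∫ w in ball (0:ℂ) r, g4 w = 0 := by
      refine odd_vanish r Complex.conjLIE g4 (fun w => ?_)
      simp [hg4, Complex.conjLIE_apply, mul_neg, Real.sin_neg]
    rw [h2, h3, h4]
    ring
  · -- error bound
    set M : ℝ := max (i:ℝ) (j:ℝ) with hM
    have hiM : (i : ℝ) ≤ M := le_max_left _ _
    have hjM : (j : ℝ) ≤ M := le_max_right _ _
    have hM0 : (0:ℝ) ≤ M := le_trans (Nat.cast_nonneg i) hiM
    have hvol : (volume (ball (0:ℂ) r)).toReal = Real.pi * r ^ 2 := by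
      rw [Complex.volume_ball, ENNReal.toReal_mul, ENNReal.toReal_pow,
        ENNReal.toReal_ofReal hr.le]
      simp only [ENNReal.coe_toReal, NNReal.coe_real_pi]
      ring
    have hconst : ∫ _w in ball (0:ℂ) r, (1:ℝ) = Real.pi * r ^ 2 := by
      rw [setIntegral_const, measureReal_def, hvol, smul_eq_mul, mul_one]
    have hint1 : IntegrableOn (fun _ : ℂ => (1:ℝ)) (ball (0:ℂ) r) :=
      integrableOn_const measure_ball_lt_top.ne
    have hEi : I1 - Real.pi * r ^ 2 = ∫ w in ball (0:ℂ) r, (g1 w - 1) := by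
      rw [integral_sub hI1 hint1, hconst, hI1d]
    have hi2 : (i:ℝ) ^ 2 ≤ M ^ 2 := by
      have : (0:ℝ) ≤ (i:ℝ) := Nat.cast_nonneg i
      nlinarith
    have hj2 : (j:ℝ) ^ 2 ≤ M ^ 2 := by
      have : (0:ℝ) ≤ (j:ℝ) := Nat.cast_nonneg j
      nlinarith
    have hbound : ∀ w ∈ ball (0:ℂ) r, ‖g1 w - 1‖ ≤ Real.pi ^ 2 * M ^ 2 * r ^ 2 / 2 := by
      intro w hw
      have hst : w.re ^ 2 + w.im ^ 2 ≤ r ^ 2 := by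
        have habs : ‖w‖ < r := by
          simpa [mem_ball, dist_zero_right] using hw
        have h1 : ‖w‖ ^ 2 = w.re ^ 2 + w.im ^ 2 := by
          rw [Complex.sq_norm, Complex.normSq_apply]; ring
        nlinarith [norm_nonneg w]
      have ha := abs_cos_sub_one_le (Real.pi * i * w.re)
      have hb := abs_cos_sub_one_le (Real.pi * j * w.im)
      have hsplit : |g1 w - 1|
          ≤ |Real.cos (Real.pi * i * w.re) - 1| + |Real.cos (Real.pi * j * w.im) - 1| := by
        have : g1 w - 1 = Real.cos (Real.pi * i * w.re) * (Real.cos (Real.pi * j * w.im) - 1)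
            + (Real.cos (Real.pi * i * w.re) - 1) := by
          simp only [hg1]; ring
        rw [this]
        calc |Real.cos (Real.pi * i * w.re) * (Real.cos (Real.pi * j * w.im) - 1)
              + (Real.cos (Real.pi * i * w.re) - 1)|
            ≤ |Real.cos (Real.pi * i * w.re) * (Real.cos (Real.pi * j * w.im) - 1)|
              + |Real.cos (Real.pi * i * w.re) - 1| := abs_add_le _ _
          _ ≤ |Real.cos (Real.pi * j * w.im) - 1| + |Real.cos (Real.pi * i * w.re) - 1| := by
              rw [abs_mul]
              have := Real.abs_cos_le_one (Real.pi * i * w.re)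
              nlinarith [abs_nonneg (Real.cos (Real.pi * j * w.im) - 1)]
          _ = _ := by ring
      have ea : (Real.pi * i * w.re) ^ 2 ≤ Real.pi ^ 2 * M ^ 2 * w.re ^ 2 := by
        have : (Real.pi * i * w.re) ^ 2 = Real.pi ^ 2 * (i:ℝ) ^ 2 * w.re ^ 2 := by ring
        rw [this]
        gcongr
      have eb : (Real.pi * j * w.im) ^ 2 ≤ Real.pi ^ 2 * M ^ 2 * w.im ^ 2 := by
        have : (Real.pi * j * w.im) ^ 2 = Real.pi ^ 2 * (j:ℝ) ^ 2 * w.im ^ 2 := by ring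
        rw [this]
        gcongr
      have hpi2 : (0:ℝ) ≤ Real.pi ^ 2 * M ^ 2 := by positivity
      have hprod : Real.pi ^ 2 * M ^ 2 * (w.re ^ 2 + w.im ^ 2)
          ≤ Real.pi ^ 2 * M ^ 2 * r ^ 2 := mul_le_mul_of_nonneg_left hst hpi2
      have hdist : Real.pi ^ 2 * M ^ 2 * (w.re ^ 2 + w.im ^ 2)
          = Real.pi ^ 2 * M ^ 2 * w.re ^ 2 + Real.pi ^ 2 * M ^ 2 * w.im ^ 2 := by ring
      rw [Real.norm_eq_abs]
      linarith
    have hmain := norm_setIntegral_le_of_norm_le_const (μ := volume) (s := ball (0:ℂ) r)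
      measure_ball_lt_top hbound
    rw [measureReal_def, hvol, Real.norm_eq_abs] at hmain
    rw [hEi]
    calc |∫ w in ball (0:ℂ) r, (g1 w - 1)|
        ≤ Real.pi ^ 2 * M ^ 2 * r ^ 2 / 2 * (Real.pi * r ^ 2) := hmain
      _ = Real.pi ^ 3 * r ^ 4 * M ^ 2 / 2 := by ring
      _ ≤ Real.pi ^ 3 * r ^ 4 * M ^ 2 := by
          have : (0:ℝ) ≤ Real.pi ^ 3 * r ^ 4 * M ^ 2 := by positivity
          linarith
end
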